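/- Let m ≥ 1 be an integer and let n, k be natural numbers. Then ∫∫_ℂ z^n · conj(z)^k · K_m(|z|²) dA(z) = π (n!)^m if n = k, and = 0 if n ≠ k, where dA denotes the Lebesgue (area) measure on ℂ. -/

import Mathlib

open MeasureTheory

open Set

open scoped Real

/-- The kernel `K_m`, defined recursively by `K_1(x) = e^{-x}` and
`K_{m+1}(x) = ∫_0^∞ K_m(x/t) e^{-t} dt/t` (Mellin convolution with `K_1`).
The value for `m = 0` is junk. -/
noncomputable def Kker : ℕ → ℝ → ℝ
  | 0, _ => 0
  | 1, x => Real.exp (-x)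
  | (m + 2), x => ∫ t in Set.Ioi (0 : ℝ), Kker (m + 1) (x / t) * Real.exp (-t) / t

lemma Kker_meas : ∀ m, Measurable (Kker m)
  | 0 => measurable_const
  | 1 => by simpa [Kker] using (by fun_prop : Measurable fun x : ℝ => Real.exp (-x))
  | (m + 2) => by
    have ih := Kker_meas (m + 1)
    have hjoint : Measurable (fun p : ℝ × ℝ =>
        Kker (m + 1) (p.1 / p.2) * Real.exp (-p.2) / p.2) := by fun_prop
    have := (hjoint.stronglyMeasurable.integral_prod_right'
      (ν := volume.restrict (Ioi (0:ℝ)))).measurable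
    simpa [Kker] using this

lemma Kker_nonneg : ∀ m, ∀ x : ℝ, 0 ≤ Kker m x
  | 0, x => le_refl _
  | 1, x => (Real.exp_pos _).le
  | (m + 2), x => by
    have ih := Kker_nonneg (m + 1)
    show 0 ≤ ∫ t in Set.Ioi (0 : ℝ), Kker (m + 1) (x / t) * Real.exp (-t) / t
    apply setIntegral_nonneg measurableSet_Ioi
    intro t ht
    have ht' : 0 < t := ht
    have h1 := ih (x / t)
    positivity

lemma lintegral_Ioi_mul_left (t : ℝ) (ht : 0 < t) (F : ℝ → ENNReal) (hF : Measurable F) :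
    ∫⁻ x in Ioi (0:ℝ), F x = ENNReal.ofReal t * ∫⁻ u in Ioi (0:ℝ), F (t * u) := by
  have hpre : (fun u : ℝ => t * u) ⁻¹' Ioi 0 = Ioi 0 := by
    ext u; simp [Set.mem_Ioi, mul_pos_iff_of_pos_left ht]
  have hmap : Measure.map (fun u : ℝ => t * u) (volume.restrict (Ioi 0))
      = (ENNReal.ofReal |t⁻¹|) • volume.restrict (Ioi 0) := by
    rw [← hpre, ← Measure.restrict_map (measurable_const_mul t) measurableSet_Ioi,
      Real.map_volume_mul_left ht.ne', Measure.restrict_smul, hpre]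
  have h1 : ∫⁻ u in Ioi (0:ℝ), F (t * u)
      = ENNReal.ofReal t⁻¹ * ∫⁻ x in Ioi (0:ℝ), F x := by
    rw [← lintegral_map hF (measurable_const_mul t), hmap, lintegral_smul_measure,
      abs_of_pos (inv_pos.mpr ht), smul_eq_mul]
  rw [h1, ← mul_assoc, ← ENNReal.ofReal_mul ht.le, mul_inv_cancel₀ ht.ne',
    ENNReal.ofReal_one, one_mul]

lemma lintegral_pow_exp (n : ℕ) :
    ∫⁻ x in Ioi (0:ℝ), ENNReal.ofReal (x ^ n * Real.exp (-x))
      = ENNReal.ofReal (n.factorial) := by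
  have hpos : (0:ℝ) < n + 1 := by positivity
  have hint : IntegrableOn (fun x : ℝ => Real.exp (-x) * x ^ ((n+1:ℝ) - 1)) (Ioi 0) :=
    Real.GammaIntegral_convergent hpos
  have hcongr : EqOn (fun x : ℝ => Real.exp (-x) * x ^ ((n+1:ℝ) - 1))
      (fun x : ℝ => x ^ n * Real.exp (-x)) (Ioi 0) := by
    intro x hx
    have hx' : (0:ℝ) < x := hx
    simp only [add_sub_cancel_right]
    rw [mul_comm, Real.rpow_natCast]
  have hint' : IntegrableOn (fun x : ℝ => x ^ n * Real.exp (-x)) (Ioi 0) :=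
    hint.congr_fun hcongr measurableSet_Ioi
  have hval : ∫ x in Ioi (0:ℝ), x ^ n * Real.exp (-x) = n.factorial := by
    rw [← setIntegral_congr_fun measurableSet_Ioi hcongr]
    rw [← Real.Gamma_eq_integral hpos]
    exact_mod_cast Real.Gamma_nat_eq_factorial n
  have hae : 0 ≤ᵐ[volume.restrict (Ioi (0:ℝ))] fun x : ℝ => x ^ n * Real.exp (-x) := by
    filter_upwards [self_mem_ae_restrict measurableSet_Ioi] with x hx
    have hx' : (0:ℝ) < x := hx
    positivity
  rw [← MeasureTheory.ofReal_integral_eq_lintegral_ofReal hint' hae, hval]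

lemma conv_step (K : ℝ → ℝ) (hKm : Measurable K) (hKnn : ∀ x, 0 ≤ K x) (n : ℕ) (C : ℝ)
    (hK : ∫⁻ u in Ioi (0:ℝ), ENNReal.ofReal (u ^ n * K u) = ENNReal.ofReal C) :
    ∫⁻ x in Ioi (0:ℝ),
        ENNReal.ofReal (x ^ n * ∫ t in Ioi (0:ℝ), K (x / t) * Real.exp (-t) / t)
      = ENNReal.ofReal (n.factorial * C) := by
  set Φ : ℝ → ℝ → ENNReal :=
    fun x t => ENNReal.ofReal (x ^ n * (K (x / t) * Real.exp (-t) / t)) with hΦdef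
  have hΦ : Measurable (Function.uncurry Φ) := by
    apply Measurable.ennreal_ofReal
    exact (measurable_fst.pow_const n).mul
      (((hKm.comp (measurable_fst.div measurable_snd)).mul
        (Real.measurable_exp.comp measurable_snd.neg)).div measurable_snd)
  have hΦx : ∀ t, Measurable (fun x => Φ x t) := fun t =>
    hΦ.comp (measurable_id.prodMk measurable_const)
  have hKof : Measurable (fun u : ℝ => ENNReal.ofReal (u ^ n * K u)) :=
    ((measurable_id.pow_const n).mul hKm).ennreal_ofReal
  have claimA : ∀ t ∈ Ioi (0:ℝ), ∫⁻ x in Ioi (0:ℝ), Φ x t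
      = ENNReal.ofReal (t ^ n * Real.exp (-t)) * ENNReal.ofReal C := by
    intro t ht
    have ht' : (0:ℝ) < t := ht
    rw [lintegral_Ioi_mul_left t ht' _ (hΦx t)]
    have hcongr : ∀ᵐ u ∂(volume : Measure ℝ), u ∈ Ioi (0:ℝ) →
        Φ (t * u) t = ENNReal.ofReal (t ^ n * Real.exp (-t) / t)
          * ENNReal.ofReal (u ^ n * K u) := by
      apply Filter.Eventually.of_forall
      intro u hu
      rw [hΦdef]
      simp only
      rw [mul_div_cancel_left₀ u ht'.ne']
      rw [show (t * u) ^ n * (K u * Real.exp (-t) / t)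
          = (t ^ n * Real.exp (-t) / t) * (u ^ n * K u) by ring]
      rw [ENNReal.ofReal_mul (by positivity)]
    rw [setLIntegral_congr_fun_ae measurableSet_Ioi hcongr,
      lintegral_const_mul _ hKof, hK, ← mul_assoc,
      ← ENNReal.ofReal_mul ht'.le]
    congr 2
    field_simp
  have claimB : ∫⁻ x in Ioi (0:ℝ), ∫⁻ t in Ioi (0:ℝ), Φ x t
      = ENNReal.ofReal (n.factorial * C) := by
    rw [lintegral_lintegral_swap hΦ.aemeasurable]
    rw [setLIntegral_congr_fun measurableSet_Ioi claimA,
      lintegral_mul_const _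
        (by fun_prop : Measurable fun t : ℝ => ENNReal.ofReal (t ^ n * Real.exp (-t))),
      lintegral_pow_exp n, ← ENNReal.ofReal_mul (by positivity)]
  have hg : Measurable (fun x => ∫⁻ t in Ioi (0:ℝ), Φ x t) :=
    Measurable.lintegral_prod_right hΦ
  have hfin : ∫⁻ x in Ioi (0:ℝ), (∫⁻ t in Ioi (0:ℝ), Φ x t) ≠ ⊤ := by
    rw [claimB]; exact ENNReal.ofReal_ne_top
  have hae := ae_lt_top hg hfin
  rw [← claimB]
  apply lintegral_congr_ae
  filter_upwards [hae, self_mem_ae_restrict measurableSet_Ioi] with x hfinx hx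
  have hx' : (0:ℝ) < x := hx
  set f : ℝ → ℝ := fun t => K (x / t) * Real.exp (-t) / t with hfdef
  have hfm : Measurable f :=
    ((hKm.comp (measurable_const.div measurable_id)).mul
      (Real.measurable_exp.comp measurable_neg)).div measurable_id
  have hfnn : 0 ≤ᵐ[volume.restrict (Ioi (0:ℝ))] f := by
    filter_upwards [self_mem_ae_restrict measurableSet_Ioi] with t ht
    have ht' : (0:ℝ) < t := ht
    have := hKnn (x / t)
    positivity
  have hΦeq : ∀ t, Φ x t = ENNReal.ofReal (x ^ n) * ENNReal.ofReal (f t) := fun t =>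
    ENNReal.ofReal_mul (by positivity)
  have hgx : (∫⁻ t in Ioi (0:ℝ), Φ x t)
      = ENNReal.ofReal (x ^ n) * ∫⁻ t in Ioi (0:ℝ), ENNReal.ofReal (f t) := by
    simp_rw [hΦeq]
    exact lintegral_const_mul _ hfm.ennreal_ofReal
  have hfint : ∫⁻ t in Ioi (0:ℝ), ENNReal.ofReal (f t) < ⊤ := by
    by_contra h
    push_neg at h
    have htop : ∫⁻ t in Ioi (0:ℝ), ENNReal.ofReal (f t) = ⊤ := top_le_iff.mp h
    rw [hgx, htop, ENNReal.mul_top (by simpa using (by positivity : (0:ℝ) < x ^ n))] at hfinx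
    exact absurd hfinx (lt_irrefl ⊤)
  have hfi : Integrable f (volume.restrict (Ioi (0:ℝ))) :=
    ⟨hfm.aestronglyMeasurable, (hasFiniteIntegral_iff_ofReal hfnn).2 hfint⟩
  rw [hgx, ← MeasureTheory.ofReal_integral_eq_lintegral_ofReal hfi hfnn,
    ← ENNReal.ofReal_mul (by positivity)]

lemma Kker_lintegral : ∀ (m n : ℕ),
    ∫⁻ x in Ioi (0:ℝ), ENNReal.ofReal (x ^ n * Kker (m+1) x)
      = ENNReal.ofReal ((n.factorial : ℝ) ^ (m+1))
  | 0, n => by simpa [Kker, pow_one] using lintegral_pow_exp n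
  | (m+1), n => by
    have ih := Kker_lintegral m n
    have step := conv_step (Kker (m+1)) (Kker_meas (m+1)) (Kker_nonneg (m+1)) n _ ih
    have hunf : ∀ x : ℝ,
        Kker (m+2) x = ∫ t in Ioi (0:ℝ), Kker (m+1) (x/t) * Real.exp (-t) / t :=
      fun x => rfl
    simp_rw [show m+1+1 = m+2 from rfl, hunf]
    rw [step]
    congr 1
    rw [pow_succ]
    ring

lemma Kker_integral (m n : ℕ) :
    ∫ x in Ioi (0:ℝ), x ^ n * Kker (m+1) x = ((n.factorial : ℝ)) ^ (m+1) := by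
  have h := Kker_lintegral m n
  have hnn : 0 ≤ᵐ[volume.restrict (Ioi (0:ℝ))] fun x : ℝ => x ^ n * Kker (m+1) x := by
    filter_upwards [self_mem_ae_restrict measurableSet_Ioi] with x hx
    have h1 := Kker_nonneg (m+1) x
    have hx' : (0:ℝ) < x := hx
    positivity
  rw [integral_eq_lintegral_of_nonneg_ae hnn
    (((measurable_id.pow_const n).mul (Kker_meas (m+1))).aestronglyMeasurable), h,
    ENNReal.toReal_ofReal (by positivity)]

/-- For `m ≥ 1` and natural numbers `n, k`,
`∫∫_ℂ z^n conj(z)^k K_m(|z|²) dA(z) = π (n!)^m δ_{n,k}`,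
with `dA` the Lebesgue area measure on `ℂ`. -/
theorem integral_monomials_Kker (m : ℕ) (hm : 1 ≤ m) (n k : ℕ) :
    ∫ z : ℂ, z ^ n * (starRingEnd ℂ) z ^ k * (Kker m (‖z‖ ^ 2) : ℂ) =
      if n = k then ((Real.pi * (Nat.factorial n : ℝ) ^ m : ℝ) : ℂ) else 0 := by
  obtain ⟨m', rfl⟩ : ∃ m', m = m' + 1 := ⟨m - 1, by omega⟩
  set M := m' + 1 with hM
  set c : ℂ := (n : ℂ) - (k : ℂ) with hc
  set g : ℝ → ℂ := fun r => (r:ℂ) ^ (n + k + 1) * ((Kker M (r ^ 2) : ℝ) : ℂ) with hg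
  set h : ℝ → ℂ := fun θ => Complex.exp ((c * Complex.I) * (θ:ℂ)) with hh
  have key : (∫ z : ℂ, z ^ n * (starRingEnd ℂ) z ^ k * (Kker M (‖z‖ ^ 2) : ℂ))
      = (∫ r in Ioi (0:ℝ), g r) * (∫ θ in Ioo (-π) π, h θ) := by
    rw [← Complex.integral_comp_polarCoord_symm, polarCoord_target]
    have hptw : EqOn
        (fun p : ℝ × ℝ => p.1 • ((Complex.polarCoord.symm p) ^ n
          * (starRingEnd ℂ) (Complex.polarCoord.symm p) ^ k
          * ((Kker M (‖Complex.polarCoord.symm p‖ ^ 2) : ℝ) : ℂ)))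
        (fun p : ℝ × ℝ => g p.1 * h p.2) (Ioi 0 ×ˢ Ioo (-π) π) := by
      intro p hp
      have hr' : (0:ℝ) < p.1 := hp.1
      have hz : Complex.polarCoord.symm p
          = (p.1:ℂ) * Complex.exp ((p.2:ℂ) * Complex.I) := by
        rw [Complex.polarCoord_symm_apply, Complex.exp_mul_I, Complex.ofReal_cos,
          Complex.ofReal_sin]
      have habs : ‖Complex.polarCoord.symm p‖ ^ 2 = p.1 ^ 2 := by
        rw [Complex.norm_polarCoord_symm, abs_of_pos hr']
      have habs2 : ‖(p.1:ℂ) * Complex.exp ((p.2:ℂ) * Complex.I)‖ ^ 2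
          = p.1 ^ 2 := by rw [← hz]; exact habs
      simp only [hz]
      rw [habs2]
      have hconj : (starRingEnd ℂ) ((p.1:ℂ) * Complex.exp ((p.2:ℂ) * Complex.I))
          = (p.1:ℂ) * Complex.exp (-((p.2:ℂ) * Complex.I)) := by
        rw [map_mul, Complex.conj_ofReal, ← Complex.exp_conj]
        congr 1
        simp [Complex.conj_I]
      rw [hconj, Complex.real_smul, mul_pow, mul_pow,
        ← Complex.exp_nat_mul, ← Complex.exp_nat_mul]
      have harg : (c * Complex.I) * (p.2:ℂ)
          = (n:ℂ) * ((p.2:ℂ) * Complex.I) + (k:ℂ) * (-((p.2:ℂ) * Complex.I)) := by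
        rw [hc]; ring
      rw [hg, hh]
      simp only
      rw [harg, Complex.exp_add]
      ring
    rw [setIntegral_congr_fun (measurableSet_Ioi.prod measurableSet_Ioo) hptw,
      Measure.volume_eq_prod, setIntegral_prod_mul]
  by_cases hnk : n = k
  · subst hnk
    have hθ : (∫ θ in Ioo (-π) π, h θ) = ((2 * π : ℝ) : ℂ) := by
      have hc0 : c = 0 := by rw [hc]; ring
      have hvol : (volume (Ioo (-π) π)).toReal = 2 * π := by
        rw [Real.volume_Ioo, ENNReal.toReal_ofReal (by linarith [Real.pi_pos])]; ring
      simp only [hh, hc0, zero_mul, Complex.exp_zero]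
      rw [setIntegral_const, measureReal_def, hvol, Complex.real_smul, mul_one]
    have hrad : (∫ r in Ioi (0:ℝ), g r) = (((n.factorial:ℝ) ^ M / 2 : ℝ) : ℂ) := by
      have hreal : ∫ r in Ioi (0:ℝ), r ^ (n + n + 1) * Kker M (r ^ 2)
          = (n.factorial:ℝ) ^ M / 2 := by
        have hmell := Kker_integral m' n
        have hsub := integral_comp_rpow_Ioi (fun x : ℝ => x ^ n * Kker M x)
          (p := (2:ℝ)) two_ne_zero
        rw [hmell] at hsub
        have hc2 : EqOn
            (fun x : ℝ => (|(2:ℝ)| * x ^ ((2:ℝ)-1)) •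
              ((x ^ ((2:ℝ)):ℝ) ^ n * Kker M (x ^ ((2:ℝ)))))
            (fun x : ℝ => 2 * (x ^ (n+n+1) * Kker M (x^2))) (Ioi 0) := by
          intro x hx
          have hx' : (0:ℝ) < x := hx
          have hx2 : x ^ ((2:ℝ)) = x ^ 2 := by
            rw [show ((2:ℝ)) = ((2:ℕ):ℝ) by norm_num, Real.rpow_natCast]
          simp only [smul_eq_mul, hx2]
          rw [show |(2:ℝ)| = 2 by norm_num, show ((2:ℝ)-1) = 1 by norm_num,
            Real.rpow_one, ← pow_mul, show 2*n = n+n from two_mul n]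
          ring
        rw [setIntegral_congr_fun measurableSet_Ioi hc2, integral_const_mul] at hsub
        linarith
      calc (∫ r in Ioi (0:ℝ), g r)
          = ∫ r in Ioi (0:ℝ), ((r ^ (n+n+1) * Kker M (r^2) : ℝ) : ℂ) := by
            apply setIntegral_congr_fun measurableSet_Ioi
            intro r hr
            rw [hg]
            push_cast
            ring
        _ = (((n.factorial:ℝ) ^ M / 2 : ℝ) : ℂ) := by
            rw [← hreal]; exact integral_ofReal
    rw [key, hθ, hrad, if_pos rfl]
    push_cast
    ring
  · have hθ : (∫ θ in Ioo (-π) π, h θ) = 0 := by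
      have hcne : c * Complex.I ≠ 0 := by
        apply mul_ne_zero _ Complex.I_ne_zero
        rw [hc, sub_ne_zero]
        exact fun hnk' => hnk (by exact_mod_cast hnk')
      rw [← integral_Ioc_eq_integral_Ioo,
        ← intervalIntegral.integral_of_le (by linarith [Real.pi_pos])]
      simp only [hh]
      rw [integral_exp_mul_complex hcne]
      have hexp : Complex.exp (c * Complex.I * (π:ℂ))
          = Complex.exp (c * Complex.I * ((-π : ℝ):ℂ)) := by
        rw [Complex.exp_eq_exp_iff_exists_int]
        exact ⟨(n:ℤ) - (k:ℤ), by rw [hc]; push_cast; ring⟩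
      rw [hexp, sub_self, zero_div]
    rw [key, hθ, mul_zero, if_neg hnk]
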